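/- Let (X, μ) be a measure space and let s, q : X → ℝ be probability densities with respect to μ, with q > 0 μ-a.e., such that (s−q)²/q is μ-integrable. For γ ∈ (0,1] set y_γ := (1−γ)·q + γ·s. Then (2/γ²)·∫ y_γ·log(y_γ/q) dμ tends to ∫ (s−q)²/q dμ as γ → 0⁺. -/

import Mathlib

open MeasureTheory Filter

-- slope limit: log(1+u)/u → 1
lemma aux_log_slope : Tendsto (fun u : ℝ => Real.log (1 + u) / u) (nhdsWithin 0 {0}ᶜ) (nhds 1) := by
  have h : HasDerivAt (fun u : ℝ => Real.log (1 + u)) 1 0 := by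
    have h1 : HasDerivAt (fun u : ℝ => 1 + u) 1 0 := (hasDerivAt_id 0).const_add 1
    have h2 := (Real.hasDerivAt_log (by norm_num : (1:ℝ) + 0 ≠ 0)).comp 0 h1
    exact h2.congr_deriv (by norm_num)
  have := hasDerivAt_iff_tendsto_slope.mp h
  refine this.congr fun u => ?_
  simp [slope_def_field]

lemma aux_lemA : Tendsto (fun u : ℝ => ((1 + u) * Real.log (1 + u) - u) / u ^ 2)
    (nhdsWithin 0 {0}ᶜ) (nhds (1/2)) := by
  have hmem : Set.Ioo (-(1:ℝ)/2) (1/2) ∈ nhds (0:ℝ) := Ioo_mem_nhds (by norm_num) (by norm_num)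
  apply HasDerivAt.lhopital_zero_nhdsNE (f' := fun u => Real.log (1 + u)) (g' := fun u => 2 * u)
  · filter_upwards [nhdsWithin_le_nhds hmem] with u hu
    have hpos : (0:ℝ) < 1 + u := by have := hu.1; linarith
    have h1 : HasDerivAt (fun u : ℝ => 1 + u) 1 u := (hasDerivAt_id u).const_add 1
    have h2 : HasDerivAt (fun u : ℝ => Real.log (1 + u)) (1/(1+u)) u := by
      exact ((Real.hasDerivAt_log (ne_of_gt hpos)).comp u h1).congr_deriv (by simp)
    have h3 := (h1.mul h2).sub (hasDerivAt_id u)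
    refine h3.congr_deriv ?_
    rw [mul_one_div_cancel hpos.ne']; ring
  · filter_upwards with u
    simpa using (hasDerivAt_pow 2 u)
  · filter_upwards [self_mem_nhdsWithin] with u hu
    simpa using hu
  · have hc : ContinuousAt (fun u : ℝ => (1 + u) * Real.log (1 + u) - u) 0 := by
      have : ContinuousAt (fun u : ℝ => Real.log (1 + u)) 0 :=
        (Real.continuousAt_log (by norm_num)).comp (by fun_prop)
      fun_prop
    have := hc.tendsto.mono_left (nhdsWithin_le_nhds (s := {0}ᶜ))
    simpa using this
  · have : Tendsto (fun u : ℝ => u ^ 2) (nhds 0) (nhds (0^2)) := (continuous_pow 2).tendsto 0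
    simpa using this.mono_left (nhdsWithin_le_nhds (s := {0}ᶜ))
  · have := aux_log_slope.div_const 2
    refine this.congr fun u => ?_
    rw [div_div, mul_comm]

-- pointwise limit
lemma aux_lemB (a b : ℝ) (ha : 0 ≤ a) (hb : 0 < b) :
    Tendsto (fun γ : ℝ => (2 / γ ^ 2) *
      ((b + γ * (a - b)) * Real.log ((b + γ * (a - b)) / b) - γ * (a - b)))
      (nhdsWithin 0 (Set.Ioi 0)) (nhds ((a - b) ^ 2 / b)) := by
  rcases eq_or_ne a b with hab | hab
  · subst hab
    simp only [sub_self, mul_zero, add_zero, div_self (ne_of_gt hb), Real.log_one]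
    simpa using tendsto_const_nhds (f := nhdsWithin (0:ℝ) (Set.Ioi 0)) (a := (0:ℝ))
  · set d := a - b with hd
    have hdne : d ≠ 0 := sub_ne_zero.mpr hab
    have hbne : b ≠ 0 := ne_of_gt hb
    have hu : Tendsto (fun γ : ℝ => γ * (d / b)) (nhdsWithin 0 (Set.Ioi 0))
        (nhdsWithin 0 {0}ᶜ) := by
      rw [tendsto_nhdsWithin_iff]
      constructor
      · have : Tendsto (fun γ : ℝ => γ * (d / b)) (nhds 0) (nhds (0 * (d/b))) :=
          (continuous_id.mul continuous_const).tendsto 0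
        simpa using this.mono_left (nhdsWithin_le_nhds (s := Set.Ioi 0))
      · filter_upwards [self_mem_nhdsWithin] with γ hγ
        simp only [Set.mem_compl_iff, Set.mem_singleton_iff]
        exact mul_ne_zero (ne_of_gt hγ) (div_ne_zero hdne hbne)
    have hcomp := (aux_lemA.comp hu).const_mul (2 * d ^ 2 / b)
    have hval : 2 * d ^ 2 / b * (1/2) = d ^ 2 / b := by ring
    rw [hval] at hcomp
    refine hcomp.congr' ?_
    filter_upwards [self_mem_nhdsWithin] with γ hγ
    have hγne : γ ≠ 0 := ne_of_gt hγ
    have harg : (b + γ * d) / b = 1 + γ * (d / b) := by field_simp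
    simp only [Function.comp_apply, harg]
    set L := Real.log (1 + γ * (d / b)) with hL
    field_simp

lemma aux_ineq (a b : ℝ) (ha : 0 ≤ a) (hb : 0 < b) :
    0 ≤ a * Real.log (a / b) - (a - b) ∧
      a * Real.log (a / b) - (a - b) ≤ (a - b) ^ 2 / b := by
  rcases eq_or_lt_of_le ha with rfl | hapos
  · simp only [zero_div, Real.log_zero, mul_zero, zero_sub, sub_neg_eq_add, zero_add]
    constructor
    · linarith
    · rw [neg_pow]
      simp [pow_two, mul_div_assoc, div_self (ne_of_gt hb)]
  · have habpos : 0 < a / b := div_pos hapos hb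
    have hup : Real.log (a / b) ≤ a / b - 1 := Real.log_le_sub_one_of_pos habpos
    have hlow : 1 - b / a ≤ Real.log (a / b) := by
      have := Real.log_le_sub_one_of_pos (div_pos hb hapos)
      have hinv : Real.log (b / a) = - Real.log (a / b) := by
        rw [← Real.log_inv, inv_div]
      linarith [this, hinv ▸ this]
    constructor
    · have h1 : a * (1 - b / a) ≤ a * Real.log (a / b) :=
        mul_le_mul_of_nonneg_left hlow ha
      have h2 : a * (1 - b / a) = a - b := by field_simp
      linarith
    · have h1 : a * Real.log (a / b) ≤ a * (a / b - 1) :=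
        mul_le_mul_of_nonneg_left hup ha
      have h2 : a * (a / b - 1) - (a - b) = (a - b) ^ 2 / b := by field_simp
      linarith

/-- The limit computed (via L'Hospital's rule) in the proof of Theorem 2: for probability
densities `s, q` with `q > 0` a.e. and `(s-q)²/q` integrable, writing
`y_γ = (1-γ)q + γs`, the curvature ratio `(2/γ²) D_KL(y_γ‖q)` tends to the χ² divergence
`∫ (s-q)²/q dμ` as `γ → 0⁺`. -/
theorem kl_curvature_ratio_tendsto_chiSq
    {X : Type*} [MeasurableSpace X] (μ : Measure X)
    (s q : X → ℝ) (hs : Measurable s) (hq : Measurable q)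
    (hsnn : ∀ᵐ x ∂μ, 0 ≤ s x) (hqpos : ∀ᵐ x ∂μ, 0 < q x)
    (hsone : ∫ x, s x ∂μ = 1) (hqone : ∫ x, q x ∂μ = 1)
    (hchi : Integrable (fun x => (s x - q x) ^ 2 / q x) μ) :
    Tendsto (fun γ : ℝ => (2 / γ ^ 2) *
        ∫ x, ((1 - γ) * q x + γ * s x) *
          Real.log (((1 - γ) * q x + γ * s x) / q x) ∂μ)
      (nhdsWithin 0 (Set.Ioi 0))
      (nhds (∫ x, (s x - q x) ^ 2 / q x ∂μ)) := by
  -- basic integrabilities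
  have hsint : Integrable s μ := by
    by_contra h; rw [integral_undef h] at hsone; norm_num at hsone
  have hqint : Integrable q μ := by
    by_contra h; rw [integral_undef h] at hqone; norm_num at hqone
  have hdint : Integrable (fun x => s x - q x) μ := hsint.sub hqint
  have hdzero : ∫ x, s x - q x ∂μ = 0 := by
    rw [integral_sub hsint hqint, hsone, hqone]; ring
  -- the shifted integrand
  set F : ℝ → X → ℝ := fun γ x => (2 / γ ^ 2) *
    ((q x + γ * (s x - q x)) * Real.log ((q x + γ * (s x - q x)) / q x)
      - γ * (s x - q x)) with hF
  have hmeasγ : ∀ γ : ℝ, Measurable fun x =>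
      (q x + γ * (s x - q x)) * Real.log ((q x + γ * (s x - q x)) / q x)
        - γ * (s x - q x) := by
    intro γ
    have hy : Measurable fun x => q x + γ * (s x - q x) :=
      hq.add (measurable_const.mul (hs.sub hq))
    exact (hy.mul ((hy.div hq).log)).sub (measurable_const.mul (hs.sub hq))
  -- for γ ∈ Ioc 0 1, a.e. bounds
  have hIoc : Set.Ioc (0:ℝ) 1 ∈ nhdsWithin (0:ℝ) (Set.Ioi 0) :=
    Ioc_mem_nhdsGT_of_mem (by norm_num : (0:ℝ) ∈ Set.Ico (0:ℝ) 1)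
  have hbd : ∀ γ ∈ Set.Ioc (0:ℝ) 1, ∀ᵐ x ∂μ,
      0 ≤ (q x + γ * (s x - q x)) * Real.log ((q x + γ * (s x - q x)) / q x)
          - γ * (s x - q x) ∧
      (q x + γ * (s x - q x)) * Real.log ((q x + γ * (s x - q x)) / q x)
          - γ * (s x - q x) ≤ γ ^ 2 * ((s x - q x) ^ 2 / q x) := by
    intro γ hγ
    filter_upwards [hqpos, hsnn] with x hqx hsx
    have hynn : 0 ≤ q x + γ * (s x - q x) := by nlinarith [hγ.1, hγ.2]
    have := aux_ineq (q x + γ * (s x - q x)) (q x) hynn hqx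
    have hsub : q x + γ * (s x - q x) - q x = γ * (s x - q x) := by ring
    rw [hsub] at this
    refine ⟨this.1, le_trans this.2 ?_⟩
    rw [mul_pow, mul_div_assoc]
  -- DCT
  have hDCT : Tendsto (fun γ => ∫ x, F γ x ∂μ) (nhdsWithin 0 (Set.Ioi 0))
      (nhds (∫ x, (s x - q x) ^ 2 / q x ∂μ)) := by
    refine tendsto_integral_filter_of_dominated_convergence
      (fun x => 2 * ((s x - q x) ^ 2 / q x)) ?_ ?_ (hchi.const_mul 2) ?_
    · filter_upwards with γ
      exact (measurable_const.mul (hmeasγ γ)).aestronglyMeasurable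
    · filter_upwards [hIoc] with γ hγ
      filter_upwards [hbd γ hγ] with x hx
      have hγpos : 0 < γ := hγ.1
      have h2γ : 0 < 2 / γ ^ 2 := by positivity
      have habs : ‖F γ x‖ = F γ x := by
        rw [Real.norm_eq_abs, abs_of_nonneg (mul_nonneg h2γ.le hx.1)]
      rw [habs, hF]
      calc (2 / γ ^ 2) *
          ((q x + γ * (s x - q x)) * Real.log ((q x + γ * (s x - q x)) / q x)
            - γ * (s x - q x))
          ≤ (2 / γ ^ 2) * (γ ^ 2 * ((s x - q x) ^ 2 / q x)) :=
            mul_le_mul_of_nonneg_left hx.2 h2γ.le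
        _ = 2 * ((s x - q x) ^ 2 / q x) := by
            have hγ2 : (γ:ℝ) ^ 2 ≠ 0 := pow_ne_zero 2 (ne_of_gt hγpos)
            have key : ∀ c : ℝ, 2 / γ ^ 2 * (γ ^ 2 * c) = 2 * c := fun c => by
              field_simp
            exact key _
    · filter_upwards [hqpos, hsnn] with x hqx hsx
      exact aux_lemB (s x) (q x) hsx hqx
  -- relate integrals
  refine hDCT.congr' ?_
  filter_upwards [hIoc] with γ hγ
  have hγpos : (0:ℝ) < γ := hγ.1
  have hform : ∀ x : X, (1 - γ) * q x + γ * s x = q x + γ * (s x - q x) :=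
    fun x => by ring
  simp only [hform]
  have hhint : Integrable (fun x =>
      (q x + γ * (s x - q x)) * Real.log ((q x + γ * (s x - q x)) / q x)
        - γ * (s x - q x)) μ := by
    refine Integrable.mono' (hchi.const_mul (γ ^ 2))
      (hmeasγ γ).aestronglyMeasurable ?_
    filter_upwards [hbd γ hγ] with x hx
    rw [Real.norm_eq_abs, abs_of_nonneg hx.1]
    calc _ ≤ γ ^ 2 * ((s x - q x) ^ 2 / q x) := hx.2
      _ = γ ^ 2 * ((s x - q x) ^ 2 / q x) := rfl
  have hyint : Integrable (fun x =>
      (q x + γ * (s x - q x)) * Real.log ((q x + γ * (s x - q x)) / q x)) μ := by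
    have := hhint.add (hdint.const_mul γ)
    refine this.congr (Eventually.of_forall fun x => ?_)
    simp only [Pi.add_apply]
    ring
  rw [hF]
  rw [integral_const_mul, integral_sub hyint (hdint.const_mul γ),
    integral_const_mul, hdzero, mul_zero, sub_zero]
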